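/- Trace bounds on fermionic block entropies in terms of the covariance matrix: Let V be a real n×n matrix such that 1 − VVᵀ is positive semidefinite (equivalently, all singular values σ₁, …, σ_n of V lie in [0, 1]). Then tr[(1 − VVᵀ)^{1/2}] ≥ ∑_{k=1}^{n} f(σ_k) ≥ tr[1 − VVᵀ], where (1 − VVᵀ)^{1/2} is the unique positive semidefinite square root. The middle quantity ∑_k f(σ_k) is the von Neumann entropy (in bits) of the reduced state of a fermionic Gaussian state whose restricted covariance matrix is V. -/

import Mathlib

open scoped BigOperators
open Matrix

/-- The fermionic entropy function
`f(x) = −((1−x)/2)·log₂((1−x)/2) − ((1+x)/2)·log₂((1+x)/2)` (convention `0·log₂0 = 0`). -/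
noncomputable def fermiEntropy (x : ℝ) : ℝ :=
  -((1 - x) / 2 * Real.logb 2 ((1 - x) / 2)) - (1 + x) / 2 * Real.logb 2 ((1 + x) / 2)

-- The unique positive semidefinite square root of a positive semidefinite real matrix
-- (junk value `0` otherwise).
open scoped Classical in
noncomputable def psqrt {n : Type*} [Fintype n] [DecidableEq n]
    (X : Matrix n n ℝ) : Matrix n n ℝ :=
  if h : X.PosSemidef then
    h.1.eigenvectorUnitary.1 * diagonal ((RCLike.ofReal : ℝ → ℝ) ∘ (√·) ∘ h.1.eigenvalues) *
      (star h.1.eigenvectorUnitary : Matrix n n ℝ)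
  else 0


section FermiAux
open Real


noncomputable def atnh (x : ℝ) : ℝ := (Real.log (1+x) - Real.log (1-x)) / 2

lemma atnh_zero : atnh 0 = 0 := by simp [atnh]

lemma atnh_hasDerivAt {x : ℝ} (h1 : -1 < x) (h2 : x < 1) :
    HasDerivAt atnh (1 / (1 - x^2)) x := by
  have h1' : (1:ℝ) + x ≠ 0 := by nlinarith
  have h2' : (1:ℝ) - x ≠ 0 := by nlinarith
  have d1 : HasDerivAt (fun y : ℝ => Real.log (1+y)) (1/(1+x)) x := by
    simpa using (((hasDerivAt_id x).const_add 1).log h1')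
  have d2 : HasDerivAt (fun y : ℝ => Real.log (1-y)) ((-1)/(1-x)) x := by
    simpa using (((hasDerivAt_id x).const_sub 1).log h2')
  have hne : (1:ℝ) - x^2 ≠ 0 := by nlinarith
  have := (d1.sub d2).div_const 2
  refine this.congr_deriv ?_
  field_simp
  ring

lemma atnh_le {x : ℝ} (hx : 0 ≤ x) (hx1 : x < 1) : atnh x ≤ x / (1 - x^2) := by
  set F : ℝ → ℝ := fun y => y / (1 - y^2) - atnh y with hF
  have key : ∀ y ∈ Set.Ioo (-1:ℝ) 1, HasDerivAt F (2*y^2/(1-y^2)^2) y := by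
    rintro y ⟨hy1, hy2⟩
    have hne : (1:ℝ) - y^2 ≠ 0 := by nlinarith
    have dq : HasDerivAt (fun z : ℝ => z / (1 - z^2)) ((1*(1-y^2) - y*(-(2*y)))/(1-y^2)^2) y := by
      exact (hasDerivAt_id y).div (by simpa using ((hasDerivAt_pow 2 y).const_sub 1)) hne
    have := dq.sub (atnh_hasDerivAt hy1 hy2)
    refine this.congr_deriv ?_
    field_simp
    ring
  have hmono : MonotoneOn F (Set.Ico (0:ℝ) 1) := by
    apply monotoneOn_of_deriv_nonneg (convex_Ico 0 1)
    · intro y hy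
      exact (key y ⟨by linarith [hy.1], hy.2⟩).continuousAt.continuousWithinAt
    · intro y hy
      rw [interior_Ico] at hy
      exact (key y ⟨by linarith [hy.1], hy.2⟩).differentiableAt.differentiableWithinAt
    · intro y hy
      rw [interior_Ico] at hy
      rw [(key y ⟨by linarith [hy.1], hy.2⟩).deriv]
      positivity
  have h0 : F 0 = 0 := by simp [hF, atnh_zero]
  have := hmono (Set.mem_Ico.mpr ⟨le_refl 0, one_pos⟩) (Set.mem_Ico.mpr ⟨hx, hx1⟩) hx
  rw [h0] at this
  simpa [hF, sub_nonneg] using this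

lemma le_atnh {x : ℝ} (hx : 0 ≤ x) (hx1 : x < 1) : x ≤ atnh x := by
  set F : ℝ → ℝ := fun y => atnh y - y with hF
  have key : ∀ y ∈ Set.Ioo (-1:ℝ) 1, HasDerivAt F (y^2/(1-y^2)) y := by
    rintro y ⟨hy1, hy2⟩
    have hne : (1:ℝ) - y^2 ≠ 0 := by nlinarith
    have := (atnh_hasDerivAt hy1 hy2).sub (hasDerivAt_id y)
    refine this.congr_deriv ?_
    field_simp
    ring
  have hmono : MonotoneOn F (Set.Ico (0:ℝ) 1) := by
    apply monotoneOn_of_deriv_nonneg (convex_Ico 0 1)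
    · intro y hy
      exact (key y ⟨by linarith [hy.1], hy.2⟩).continuousAt.continuousWithinAt
    · intro y hy
      rw [interior_Ico] at hy
      exact (key y ⟨by linarith [hy.1], hy.2⟩).differentiableAt.differentiableWithinAt
    · intro y hy
      rw [interior_Ico] at hy
      rw [(key y ⟨by linarith [hy.1], hy.2⟩).deriv]
      have hpos : (0:ℝ) < 1 - y^2 := by nlinarith [hy.1, hy.2]
      exact div_nonneg (sq_nonneg y) hpos.le
  have h0 : F 0 = 0 := by simp [hF, atnh_zero]
  have := hmono (Set.mem_Ico.mpr ⟨le_refl 0, one_pos⟩) (Set.mem_Ico.mpr ⟨hx, hx1⟩) hx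
  rw [h0] at this
  simpa [hF, sub_nonneg] using this

lemma ratio_mono : MonotoneOn (fun x => atnh x / x) (Set.Ioo (0:ℝ) 1) := by
  have key : ∀ y ∈ Set.Ioo (0:ℝ) 1,
      HasDerivAt (fun x => atnh x / x) ((1/(1-y^2) * y - atnh y * 1)/y^2) y := by
    rintro y ⟨hy1, hy2⟩
    exact (atnh_hasDerivAt (by linarith) hy2).div (hasDerivAt_id y) (ne_of_gt hy1)
  apply monotoneOn_of_deriv_nonneg (convex_Ioo 0 1)
  · intro y hy
    exact (key y hy).continuousAt.continuousWithinAt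
  · intro y hy
    rw [interior_Ioo] at hy
    exact (key y hy).differentiableAt.differentiableWithinAt
  · intro y hy
    rw [interior_Ioo] at hy
    rw [(key y hy).deriv]
    have h1 : atnh y ≤ y / (1 - y^2) := atnh_le (le_of_lt hy.1) hy.2
    have h2 : (0:ℝ) < y^2 := pow_pos hy.1 2
    have : atnh y * 1 ≤ 1/(1-y^2) * y := by
      rw [mul_one]
      calc atnh y ≤ y / (1-y^2) := h1
        _ = 1/(1-y^2) * y := by ring
    apply div_nonneg (by linarith) (le_of_lt h2)

noncomputable def Wfun (t : ℝ) : ℝ := Real.binEntropy ((1 + Real.sqrt t)/2)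

lemma Wfun_hasDerivAt {t : ℝ} (ht0 : 0 < t) (ht1 : t < 1) :
    HasDerivAt Wfun (-(atnh (Real.sqrt t) / (2 * Real.sqrt t))) t := by
  set s := Real.sqrt t with hs
  have hs0 : 0 < s := Real.sqrt_pos.mpr ht0
  have hs1 : s < 1 := by
    rw [hs, show (1:ℝ) = Real.sqrt 1 by simp]
    exact Real.sqrt_lt_sqrt ht0.le ht1
  have hp0 : (1 + s)/2 ≠ 0 := by positivity
  have hp1 : (1 + s)/2 ≠ 1 := by
    intro h
    have : s = 1 := by linarith [(div_eq_one_iff_eq (two_ne_zero)).mp h]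
    linarith
  have dsq : HasDerivAt Real.sqrt (1 / (2 * s)) t := Real.hasDerivAt_sqrt ht0.ne'
  have dp : HasDerivAt (fun t => (1 + Real.sqrt t)/2) (1/(2*s)/2) t :=
    (dsq.const_add 1).div_const 2
  have db : HasDerivAt Real.binEntropy
      (Real.log (1 - (1+s)/2) - Real.log ((1+s)/2)) ((1+s)/2) :=
    Real.hasDerivAt_binEntropy hp0 hp1
  have dc := db.comp t dp
  have heq : (Real.log (1 - (1+s)/2) - Real.log ((1+s)/2)) * (1/(2*s)/2)
      = -(atnh s / (2 * s)) := by
    have e1 : (1:ℝ) - (1+s)/2 = (1-s)/2 := by ring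
    have h1s : (0:ℝ) < 1 - s := by linarith
    have h1s' : (0:ℝ) < 1 + s := by linarith
    rw [e1, Real.log_div h1s.ne' two_ne_zero, Real.log_div h1s'.ne' two_ne_zero]
    rw [atnh]
    have hsne : s ≠ 0 := hs0.ne'
    ring
  rw [heq] at dc
  exact dc

lemma binEntropy_ge_aux {x : ℝ} (h0 : 0 ≤ x) (h1 : x ≤ 1) :
    (1 - x^2) * Real.log 2 ≤ Real.binEntropy ((1+x)/2) := by
  set K : ℝ → ℝ := fun t => Real.log 2 - Wfun t with hK
  have dK : ∀ t ∈ Set.Ioo (0:ℝ) 1, HasDerivAt K (atnh (Real.sqrt t) / (2 * Real.sqrt t)) t := by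
    rintro t ⟨ht0, ht1⟩
    have := (hasDerivAt_const t (Real.log 2)).sub (Wfun_hasDerivAt ht0 ht1)
    simp only [zero_sub, neg_neg] at this
    exact this
  have hKc : ContinuousOn K (Set.Icc (0:ℝ) 1) := by
    have : Continuous K := by
      rw [hK]; unfold Wfun; fun_prop
    exact this.continuousOn
  have hKd : DifferentiableOn ℝ K (interior (Set.Icc (0:ℝ) 1)) := by
    rw [interior_Icc]
    intro t ht
    exact (dK t ht).differentiableAt.differentiableWithinAt
  have hKm : MonotoneOn (deriv K) (interior (Set.Icc (0:ℝ) 1)) := by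
    rw [interior_Icc]
    intro a ha b hb hab
    rw [(dK a ha).deriv, (dK b hb).deriv]
    have hsa : Real.sqrt a ∈ Set.Ioo (0:ℝ) 1 := by
      constructor
      · exact Real.sqrt_pos.mpr ha.1
      · rw [show (1:ℝ) = Real.sqrt 1 by simp]
        exact Real.sqrt_lt_sqrt ha.1.le ha.2
    have hsb : Real.sqrt b ∈ Set.Ioo (0:ℝ) 1 := by
      constructor
      · exact Real.sqrt_pos.mpr hb.1
      · rw [show (1:ℝ) = Real.sqrt 1 by simp]
        exact Real.sqrt_lt_sqrt hb.1.le hb.2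
    have := ratio_mono hsa hsb (Real.sqrt_le_sqrt hab)
    have e : ∀ s : ℝ, atnh s / (2*s) = (atnh s / s)/2 := by
      intro s; rw [div_div]; ring_nf
    rw [e, e]
    linarith
  have hconv : ConvexOn ℝ (Set.Icc (0:ℝ) 1) K :=
    MonotoneOn.convexOn_of_deriv (convex_Icc 0 1) hKc hKd hKm
  have hx2 : x^2 ∈ Set.Icc (0:ℝ) 1 := ⟨sq_nonneg x, by nlinarith⟩
  have h01 : (0:ℝ) ∈ Set.Icc (0:ℝ) 1 := by constructor <;> norm_num
  have h11 : (1:ℝ) ∈ Set.Icc (0:ℝ) 1 := by constructor <;> norm_num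
  have key : K ((1 - x^2) • (0:ℝ) + (x^2) • 1) ≤ (1-x^2) • K 0 + x^2 • K 1 :=
    hconv.2 h01 h11 (by nlinarith) (sq_nonneg x) (by ring)
  have hK0 : K 0 = 0 := by
    simp [hK, Wfun, Real.sqrt_zero]
  have hK1 : K 1 = Real.log 2 := by
    simp [hK, Wfun, Real.sqrt_one, show ((1:ℝ)+1)/2 = 1 by norm_num]
  have hKx : K (x^2) = Real.log 2 - Real.binEntropy ((1+x)/2) := by
    simp [hK, Wfun, Real.sqrt_sq h0]
  simp only [smul_eq_mul] at key
  rw [show (1 - x ^ 2) * 0 + x ^ 2 * 1 = x ^ 2 by ring, hKx, hK0, hK1] at key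
  nlinarith [key]

noncomputable def hfun (s : ℝ) : ℝ := s * atnh (Real.sqrt (1 - s^2)) / Real.sqrt (1 - s^2)

lemma x_mem {s : ℝ} (hs0 : 0 < s) (hs1 : s < 1) :
    0 < Real.sqrt (1 - s^2) ∧ Real.sqrt (1 - s^2) < 1 := by
  constructor
  · exact Real.sqrt_pos.mpr (by nlinarith)
  · exact (Real.sqrt_lt' one_pos).mpr (by nlinarith)

lemma hfun_hasDerivAt {s : ℝ} (hs0 : 0 < s) (hs1 : s < 1) :
    HasDerivAt hfun ((atnh (Real.sqrt (1 - s^2)) - Real.sqrt (1 - s^2))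
      / (Real.sqrt (1 - s^2))^3) s := by
  set x := Real.sqrt (1 - s^2) with hx
  obtain ⟨hx0, hx1⟩ := x_mem hs0 hs1
  have hxs : x^2 = 1 - s^2 := Real.sq_sqrt (by nlinarith)
  have hne : (1:ℝ) - s^2 ≠ 0 := by nlinarith
  have dt : HasDerivAt (fun s : ℝ => 1 - s^2) (-(2*s)) s := by
    simpa using ((hasDerivAt_pow 2 s).const_sub 1)
  have dx : HasDerivAt (fun s : ℝ => Real.sqrt (1 - s^2)) (1/(2*x) * (-(2*s))) s :=
    (Real.hasDerivAt_sqrt hne).comp s dt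
  have da : HasDerivAt (fun s : ℝ => atnh (Real.sqrt (1 - s^2)))
      (1/(1-x^2) * (1/(2*x) * (-(2*s)))) s :=
    by have := (atnh_hasDerivAt (x := x) (by linarith) hx1).comp s dx; exact this
  have dr : HasDerivAt (fun s : ℝ => s * atnh (Real.sqrt (1 - s^2)))
      (1 * atnh x + s * (1/(1-x^2) * (1/(2*x) * (-(2*s))))) s :=
    (hasDerivAt_id s).mul da
  have dh : HasDerivAt hfun
      (((1 * atnh x + s * (1/(1-x^2) * (1/(2*x) * (-(2*s))))) * x
        - (s * atnh x) * (1/(2*x) * (-(2*s)))) / x^2) s := by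
    exact dr.div dx hx0.ne'
  convert dh using 1
  rw [show (1:ℝ) - x^2 = s^2 by rw [hxs]; ring]
  have h1 : x^2 + s^2 = 1 := by rw [hxs]; ring
  have hsne : s ≠ 0 := hs0.ne'
  have hxne : x ≠ 0 := hx0.ne'
  have e2 : ((1 * atnh x + s * (1/(s^2) * (1/(2*x) * (-(2*s))))) * x
        - (s * atnh x) * (1/(2*x) * (-(2*s)))) / x^2
      = (atnh x * (x^2 + s^2) - x) / x^3 := by
    field_simp
    ring
  rw [e2, h1, mul_one]

noncomputable def Phi (s : ℝ) : ℝ := s * Real.log 2 - Wfun (1 - s^2)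

lemma Phi_hasDerivAt {s : ℝ} (hs0 : 0 < s) (hs1 : s < 1) :
    HasDerivAt Phi (Real.log 2 - hfun s) s := by
  set x := Real.sqrt (1 - s^2) with hx
  obtain ⟨hx0, hx1⟩ := x_mem hs0 hs1
  have dt : HasDerivAt (fun s : ℝ => 1 - s^2) (-(2*s)) s := by
    simpa using ((hasDerivAt_pow 2 s).const_sub 1)
  have ht0 : 0 < 1 - s^2 := by nlinarith
  have ht1 : 1 - s^2 < 1 := by nlinarith
  have dW : HasDerivAt (fun s : ℝ => Wfun (1 - s^2))
      (-(atnh x / (2 * x)) * (-(2*s))) s :=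
    by have := (Wfun_hasDerivAt ht0 ht1).comp s dt; exact this
  have dl : HasDerivAt (fun s : ℝ => s * Real.log 2) (Real.log 2) s := by
    simpa using (hasDerivAt_id s).mul_const (Real.log 2)
  have := dl.sub dW
  refine this.congr_deriv ?_
  rw [hfun]
  have hxne : x ≠ 0 := hx0.ne'
  field_simp
  ring

lemma hfun_mono : MonotoneOn hfun (Set.Ioo (0:ℝ) 1) := by
  apply monotoneOn_of_deriv_nonneg (convex_Ioo 0 1)
  · intro s hs
    exact (hfun_hasDerivAt hs.1 hs.2).continuousAt.continuousWithinAt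
  · intro s hs
    rw [interior_Ioo] at hs
    exact (hfun_hasDerivAt hs.1 hs.2).differentiableAt.differentiableWithinAt
  · intro s hs
    rw [interior_Ioo] at hs
    rw [(hfun_hasDerivAt hs.1 hs.2).deriv]
    obtain ⟨hx0, hx1⟩ := x_mem hs.1 hs.2
    have := le_atnh hx0.le hx1
    apply div_nonneg (by linarith) (by positivity)

lemma Phi_concave : ConcaveOn ℝ (Set.Icc (0:ℝ) 1) Phi := by
  apply AntitoneOn.concaveOn_of_deriv (convex_Icc 0 1)
  · have : Continuous Phi := by
      unfold Phi Wfun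
      fun_prop
    exact this.continuousOn
  · rw [interior_Icc]
    intro s hs
    exact (Phi_hasDerivAt hs.1 hs.2).differentiableAt.differentiableWithinAt
  · rw [interior_Icc]
    intro a ha b hb hab
    rw [(Phi_hasDerivAt ha.1 ha.2).deriv, (Phi_hasDerivAt hb.1 hb.2).deriv]
    have := hfun_mono ha hb hab
    linarith

lemma binEntropy_le_aux {x : ℝ} (h0 : 0 ≤ x) (h1 : x ≤ 1) :
    Real.binEntropy ((1+x)/2) ≤ Real.sqrt (1 - x^2) * Real.log 2 := by
  set s := Real.sqrt (1 - x^2) with hs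
  have hs0 : 0 ≤ s := Real.sqrt_nonneg _
  have hs1 : s ≤ 1 := by
    rw [hs, Real.sqrt_le_one]
    nlinarith
  have hs2 : s^2 = 1 - x^2 := Real.sq_sqrt (by nlinarith)
  have h01 : (0:ℝ) ∈ Set.Icc (0:ℝ) 1 := by constructor <;> norm_num
  have h11 : (1:ℝ) ∈ Set.Icc (0:ℝ) 1 := by constructor <;> norm_num
  have key : (1-s) • Phi 0 + s • Phi 1 ≤ Phi ((1-s) • (0:ℝ) + s • 1) :=
    Phi_concave.2 h01 h11 (by linarith) hs0 (by ring)
  have hP0 : Phi 0 = 0 := by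
    simp [Phi, Wfun, Real.sqrt_one, show ((1:ℝ)+1)/2 = 1 by norm_num]
  have hP1 : Phi 1 = 0 := by
    simp [Phi, Wfun, Real.sqrt_zero]
  have hPs : Phi s = s * Real.log 2 - Real.binEntropy ((1+x)/2) := by
    rw [Phi, show (1:ℝ) - s^2 = x^2 by rw [hs2]; ring, Wfun, Real.sqrt_sq h0]
  simp only [smul_eq_mul, mul_zero, mul_one, zero_add] at key
  rw [hPs, hP0, hP1] at key
  linarith

lemma log_two_pos : (0:ℝ) < Real.log 2 := Real.log_pos one_lt_two

lemma fermi_eq (x : ℝ) :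
    fermiEntropy x = Real.binEntropy ((1+x)/2) / Real.log 2 := by
  rw [fermiEntropy, Real.binEntropy, Real.logb, Real.logb,
    show (1:ℝ) - (1+x)/2 = (1-x)/2 by ring, Real.log_inv, Real.log_inv]
  field_simp
  ring

lemma fermi_le {x : ℝ} (h0 : 0 ≤ x) (h1 : x ≤ 1) :
    fermiEntropy x ≤ Real.sqrt (1 - x^2) := by
  rw [fermi_eq, div_le_iff₀ log_two_pos]
  exact binEntropy_le_aux h0 h1

lemma le_fermi {x : ℝ} (h0 : 0 ≤ x) (h1 : x ≤ 1) :
    1 - x^2 ≤ fermiEntropy x := by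
  rw [fermi_eq, le_div_iff₀ log_two_pos]
  exact binEntropy_ge_aux h0 h1


end FermiAux

/-- **Trace bounds on fermionic block entropies in terms of the covariance matrix.**
If `V` is a real `n×n` matrix with `1 − VVᵀ` positive semidefinite and `σ₁,…,σ_n` are its
singular values (the square roots of the eigenvalues of `VVᵀ`), then
`tr[(1 − VVᵀ)^{1/2}] ≥ ∑ₖ f(σₖ) ≥ tr[1 − VVᵀ]`. -/
theorem fermionic_block_entropy_bounds (n : ℕ) (V : Matrix (Fin n) (Fin n) ℝ)
    (hV : (1 - V * Vᵀ).PosSemidef)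
    (hVVT : (V * Vᵀ).IsHermitian) (σ : Fin n → ℝ)
    (hσ : ∀ k, σ k = Real.sqrt (hVVT.eigenvalues k)) :
    ∑ k, fermiEntropy (σ k) ≤ (psqrt (1 - V * Vᵀ)).trace ∧
    (1 - V * Vᵀ).trace ≤ ∑ k, fermiEntropy (σ k) := by
  set A := V * Vᵀ with hA
  set lam := hVVT.eigenvalues with hlam
  have hApsd : A.PosSemidef := by
    have := Matrix.posSemidef_self_mul_conjTranspose V
    rwa [Matrix.conjTranspose_eq_transpose_of_trivial] at this
  have hlam0 : ∀ k, 0 ≤ lam k := fun k => hApsd.eigenvalues_nonneg k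
  -- eigenvalues are at most 1
  have hlam1 : ∀ k, lam k ≤ 1 := by
    intro k
    set v : Fin n → ℝ := ⇑(hVVT.eigenvectorBasis k) with hv
    have hmv : A *ᵥ v = lam k • v := hVVT.mulVec_eigenvectorBasis k
    have hvv : dotProduct (star v) v = 1 := by
      have horm := hVVT.eigenvectorBasis.orthonormal.1 k
      have hinner : (inner ℝ (hVVT.eigenvectorBasis k) (hVVT.eigenvectorBasis k) : ℝ)
          = dotProduct (star v) v := EuclideanSpace.inner_eq_star_dotProduct _ _
      rw [← hinner, real_inner_self_eq_norm_sq, horm]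
      norm_num
    have key := hV.dotProduct_mulVec_nonneg v
    rw [Matrix.sub_mulVec, Matrix.one_mulVec, hmv, dotProduct_sub,
      dotProduct_smul, hvv] at key
    simp only [smul_eq_mul, mul_one] at key
    linarith
  -- unitary facts
  set U : Matrix (Fin n) (Fin n) ℝ := (hVVT.eigenvectorUnitary : Matrix (Fin n) (Fin n) ℝ)
    with hU
  have hUU : U * star U = 1 := (Matrix.mem_unitaryGroup_iff).mp hVVT.eigenvectorUnitary.2
  have hsUU : star U * U = 1 := (Matrix.mem_unitaryGroup_iff').mp hVVT.eigenvectorUnitary.2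
  have htraceconj : ∀ d : Fin n → ℝ, (U * Matrix.diagonal d * star U).trace = ∑ k, d k := by
    intro d
    rw [Matrix.trace_mul_cycle, hsUU, Matrix.one_mul, Matrix.trace_diagonal]
  have hspec : A = U * Matrix.diagonal lam * star U := by
    have := hVVT.spectral_theorem
    simpa using this
  -- trace identities
  have htr1 : A.trace = ∑ k, lam k := by
    rw [hspec, htraceconj]
  have htr2 : (1 - A).trace = ∑ k, (1 - lam k) := by
    rw [Matrix.trace_sub, Matrix.trace_one, htr1, Finset.sum_sub_distrib]
    simp [Finset.card_univ]
  -- the square root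
  set B : Matrix (Fin n) (Fin n) ℝ :=
    U * Matrix.diagonal (fun k => Real.sqrt (1 - lam k)) * star U with hB
  have hBpsd : B.PosSemidef := by
    have hd : (Matrix.diagonal (fun k => Real.sqrt (1 - lam k))).PosSemidef :=
      Matrix.PosSemidef.diagonal (fun k => Real.sqrt_nonneg _)
    have := hd.mul_mul_conjTranspose_same U
    simpa [Matrix.star_eq_conjTranspose, hB] using this
  have hB2 : B ^ 2 = 1 - A := by
    rw [pow_two, hB]
    calc (U * Matrix.diagonal (fun k => Real.sqrt (1 - lam k)) * star U) *
          (U * Matrix.diagonal (fun k => Real.sqrt (1 - lam k)) * star U)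
        = U * Matrix.diagonal (fun k => Real.sqrt (1 - lam k)) * (star U * U) *
          Matrix.diagonal (fun k => Real.sqrt (1 - lam k)) * star U := by
          simp only [Matrix.mul_assoc]
      _ = U * (Matrix.diagonal (fun k => Real.sqrt (1 - lam k)) *
          Matrix.diagonal (fun k => Real.sqrt (1 - lam k))) * star U := by
          rw [hsUU, Matrix.mul_one]
          simp only [Matrix.mul_assoc]
      _ = U * Matrix.diagonal (fun k => (1 - lam k)) * star U := by
          rw [Matrix.diagonal_mul_diagonal,
            show (fun k => Real.sqrt (1 - lam k) * Real.sqrt (1 - lam k))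
                = fun k => 1 - lam k
              from funext fun k => Real.mul_self_sqrt (by linarith [hlam1 k])]
      _ = 1 - A := by
          have hd1 : Matrix.diagonal (fun k => (1:ℝ) - lam k)
              = 1 - Matrix.diagonal lam := by
            ext i j
            by_cases h : i = j <;> simp [Matrix.diagonal_apply, Matrix.one_apply, h]
          rw [hd1, Matrix.mul_sub, Matrix.sub_mul, Matrix.mul_one, hUU, ← hspec]
  have hBsqrt : B = psqrt (1 - A) := by
    have e : ∀ (X : Matrix (Fin n) (Fin n) ℝ) (hX : X.IsHermitian) (f : ℝ → ℝ), cfc f X =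
        hX.eigenvectorUnitary.1 * diagonal ((RCLike.ofReal : ℝ → ℝ) ∘ f ∘ hX.eigenvalues) *
        (star hX.eigenvectorUnitary : Matrix (Fin n) (Fin n) ℝ) := by
      intro X hX f
      rw [hX.cfc_eq, IsHermitian.cfc]
      simp [Unitary.conjStarAlgAut_apply]
    have h1 : (1 - A) = cfc (fun x : ℝ => 1 - x) A := by
      rw [cfc_sub (f := fun _ => (1:ℝ)) (g := fun x => x), cfc_const_one (R := ℝ) (a := A), cfc_id' (R := ℝ) (a := A)]
    rw [psqrt, dif_pos hV, ← e, h1, ← cfc_comp' (hg := by fun_prop), e _ hVVT, hB, hU, hlam]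
    rfl
  have htr3 : (psqrt (1 - A)).trace = ∑ k, Real.sqrt (1 - lam k) := by
    rw [← hBsqrt, hB, htraceconj]
  -- σ facts
  have hσ0 : ∀ k, 0 ≤ σ k := fun k => (hσ k) ▸ Real.sqrt_nonneg _
  have hσ1 : ∀ k, σ k ≤ 1 := fun k => (hσ k) ▸ (Real.sqrt_le_one.mpr (hlam1 k))
  have hσ2 : ∀ k, σ k ^ 2 = lam k := fun k => by
    rw [hσ k]; exact Real.sq_sqrt (hlam0 k)
  constructor
  · calc ∑ k, fermiEntropy (σ k) ≤ ∑ k, Real.sqrt (1 - lam k) := by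
          apply Finset.sum_le_sum
          intro k _
          have := fermi_le (hσ0 k) (hσ1 k)
          rwa [hσ2 k] at this
      _ = (psqrt (1 - A)).trace := htr3.symm
  · rw [htr2]
    apply Finset.sum_le_sum
    intro k _
    have := le_fermi (hσ0 k) (hσ1 k)
    rwa [hσ2 k] at this
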